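/- Let A = (Q, ι, δ, F) be an NBA over a finite alphabet Σ in which every SCC is inherently weak (a weak Büchi automaton). Then for every infinite word w : ℕ → Σ, w ∈ L(A) if and only if, in the inherently-weak-SCC construction for w (with W = Q), O_ℓ = ∅ for only finitely many ℓ ∈ ℕ. Moreover at most 3^{|Q|} distinct pairs (P_ℓ, O_ℓ) occur, so this yields a deterministic automaton equivalent to A with at most 3^{|Q|} states. -/
import Mathlib


open scoped Classical

/-- A nondeterministic Büchi automaton with state type `Q` and alphabet `A`:
an initial state, a transition relation (given as `trans : Q → A → Set Q`),
and a set `acc` of accepting transitions, which must be transitions of the automaton. -/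
structure NBA (Q A : Type) where
  init : Q
  trans : Q → A → Set Q
  acc : Set (Q × A × Q)
  acc_sub : ∀ t ∈ acc, t.2.2 ∈ trans t.1 t.2.1

namespace NBA

variable {Q A : Type}

/-- `ρ` is a run of the NBA `M` over the infinite word `w`. -/
def IsRun (M : NBA Q A) (w : ℕ → A) (ρ : ℕ → Q) : Prop :=
  ρ 0 = M.init ∧ ∀ ℓ : ℕ, ρ (ℓ + 1) ∈ M.trans (ρ ℓ) (w ℓ)

/-- `ρ` is an accepting run of `M` over `w`: a run taking accepting transitions
infinitely often. -/
def IsAcceptingRun (M : NBA Q A) (w : ℕ → A) (ρ : ℕ → Q) : Prop :=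
  M.IsRun w ρ ∧ ∀ n : ℕ, ∃ ℓ ≥ n, (ρ ℓ, w ℓ, ρ (ℓ + 1)) ∈ M.acc

/-- `w` is in the language of `M`. -/
def InLanguage (M : NBA Q A) (w : ℕ → A) : Prop :=
  ∃ ρ : ℕ → Q, M.IsAcceptingRun w ρ

/-- `q'` is reachable from `q` (via a finite, possibly empty, word). -/
def Reach (M : NBA Q A) : Q → Q → Prop :=
  Relation.ReflTransGen fun q q' => ∃ a : A, q' ∈ M.trans q a

/-- `C` is a strongly connected component: any two of its states are mutually
reachable, and it is maximal with this property. -/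
def IsSCC (M : NBA Q A) (C : Set Q) : Prop :=
  (∀ q ∈ C, ∀ q' ∈ C, M.Reach q q' ∧ M.Reach q' q) ∧
  ∀ C' : Set Q, C ⊆ C' → (∀ q ∈ C', ∀ q' ∈ C', M.Reach q q' ∧ M.Reach q' q) → C' = C

/-- An SCC is accepting if it contains an accepting transition. -/
def AccSCC (M : NBA Q A) (C : Set Q) : Prop :=
  ∃ q ∈ C, ∃ a : A, ∃ q' ∈ C, (q, a, q') ∈ M.acc

/-- A cycle through `C`: a nonempty finite sequence of transitions within
`C × A × C` starting and ending at the same state. -/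
def IsCycle (M : NBA Q A) (C : Set Q) (n : ℕ) (p : ℕ → Q) (u : ℕ → A) : Prop :=
  1 ≤ n ∧ p n = p 0 ∧ ∀ i < n, p i ∈ C ∧ p (i + 1) ∈ C ∧ p (i + 1) ∈ M.trans (p i) (u i)

/-- The cycle visits an accepting transition. -/
def CycleHasAcc (M : NBA Q A) (n : ℕ) (p : ℕ → Q) (u : ℕ → A) : Prop :=
  ∃ i < n, (p i, u i, p (i + 1)) ∈ M.acc

/-- `C` is inherently weak: either every cycle through `C` contains an accepting
transition, or no cycle through `C` does. -/
def InherentlyWeak (M : NBA Q A) (C : Set Q) : Prop :=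
  (∀ n p u, M.IsCycle C n p u → M.CycleHasAcc n p u) ∨
  (∀ n p u, M.IsCycle C n p u → ¬ M.CycleHasAcc n p u)

/-- `δ(S, a)`, the set of successors of states of `S` under letter `a`. -/
def stepSet (M : NBA Q A) (S : Set Q) (a : A) : Set Q :=
  {q' | ∃ q ∈ S, q' ∈ M.trans q a}

/-- `S_ℓ`: the set of states reached at level `ℓ` of the run DAG of `M` over `w`. -/
def reachSet (M : NBA Q A) (w : ℕ → A) : ℕ → Set Q
  | 0 => {M.init}
  | ℓ + 1 => M.stepSet (M.reachSet w ℓ) (w ℓ)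

/-- `W`: the union of the inherently weak SCCs. -/
def weakStates (M : NBA Q A) : Set Q :=
  {q | ∃ C : Set Q, M.IsSCC C ∧ M.InherentlyWeak C ∧ q ∈ C}

/-- `WA`: the union of the accepting inherently weak SCCs. -/
def weakAccStates (M : NBA Q A) : Set Q :=
  {q | ∃ C : Set Q, M.IsSCC C ∧ M.InherentlyWeak C ∧ M.AccSCC C ∧ q ∈ C}

/-- The sequence `(P_ℓ, O_ℓ)` of the inherently-weak-SCC construction of `M` over `w`. -/
noncomputable def weakSeq (M : NBA Q A) (w : ℕ → A) : ℕ → Set Q × Set Q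
  | 0 => ({M.init} ∩ M.weakStates, ∅)
  | ℓ + 1 =>
      (M.reachSet w (ℓ + 1) ∩ M.weakStates,
        if (M.weakSeq w ℓ).2 = ∅ then
          (M.reachSet w (ℓ + 1) ∩ M.weakStates) ∩ M.weakAccStates
        else M.stepSet (M.weakSeq w ℓ).2 (w ℓ) ∩ M.weakAccStates)

end NBA



namespace WeakNBAAux

/-- Pigeonhole: if a property antitone in `m` is satisfiable for every `m`
over a finite type, some element satisfies it for all `m`. -/
lemma exists_forall_of_antitone {α : Type} [Finite α] (R : ℕ → α → Prop)
    (anti : ∀ a m m', m ≤ m' → R m' a → R m a) (h : ∀ m, ∃ a, R m a) :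
    ∃ a, ∀ m, R m a := by
  by_contra hc
  push_neg at hc
  choose f hf using hc
  haveI := Fintype.ofFinite α
  obtain ⟨a, ha⟩ := h (Finset.univ.sup f)
  exact hf a (anti a (f a) _ (Finset.le_sup (Finset.mem_univ a)) ha)

/-- König-style lemma: an infinite path through nonempty levels each of whose
elements has a predecessor. -/
lemma koenig {Q : Type} [Finite Q] (T : ℕ → Q → Set Q) (O : ℕ → Set Q)
    (hne : ∀ ℓ, (O ℓ).Nonempty)
    (hstep : ∀ ℓ, ∀ q ∈ O (ℓ + 1), ∃ p ∈ O ℓ, q ∈ T ℓ p) :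
    ∃ ρ : ℕ → Q, (∀ ℓ, ρ ℓ ∈ O ℓ) ∧ ∀ ℓ, ρ (ℓ + 1) ∈ T ℓ (ρ ℓ) := by
  set PathFrom : ℕ → ℕ → Q → Prop := fun ℓ m q =>
    ∃ σ : ℕ → Q, σ ℓ = q ∧ ∀ k, ℓ ≤ k → k < m →
      σ (k + 1) ∈ T k (σ k) ∧ σ (k + 1) ∈ O (k + 1) with hPF
  have anti : ∀ ℓ q m m', m ≤ m' → PathFrom ℓ m' q → PathFrom ℓ m q := by
    rintro ℓ q m m' hmm ⟨σ, h1, h2⟩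
    exact ⟨σ, h1, fun k hk1 hk2 => h2 k hk1 (lt_of_lt_of_le hk2 hmm)⟩
  -- backward paths: from any state at level m, a path back to level ℓ
  have backpath : ∀ m, ∀ q ∈ O m, ∀ ℓ, ℓ ≤ m →
      ∃ q0 ∈ O ℓ, ∃ σ : ℕ → Q, σ ℓ = q0 ∧ σ m = q ∧ ∀ k, ℓ ≤ k → k < m →
        σ (k + 1) ∈ T k (σ k) ∧ σ (k + 1) ∈ O (k + 1) := by
    intro m
    induction m with
    | zero =>
      intro q hq ℓ hℓ
      interval_cases ℓ
      exact ⟨q, hq, fun _ => q, rfl, rfl, fun k h1 h2 => by omega⟩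
    | succ m ih =>
      intro q hq ℓ hℓ
      rcases Nat.eq_or_lt_of_le hℓ with h | h
      · exact ⟨q, h ▸ hq, fun _ => q, rfl, rfl, fun k h1 h2 => by omega⟩
      · obtain ⟨p, hp, hpt⟩ := hstep m q hq
        obtain ⟨q0, hq0, σ, hσ1, hσ2, hσ3⟩ := ih p hp ℓ (by omega)
        refine ⟨q0, hq0, fun k => if k = m + 1 then q else σ k, by
          simp only [if_neg (by omega : ℓ ≠ m + 1)]; exact hσ1, by simp, ?_⟩
        intro k hk1 hk2
        rcases Nat.lt_or_ge k m with hk | hk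
        · simp only [if_neg (by omega : k + 1 ≠ m + 1), if_neg (by omega : k ≠ m + 1)]
          exact hσ3 k hk1 hk
        · have hkm : k = m := by omega
          subst hkm
          simp only [if_pos rfl, if_neg (by omega : k ≠ k + 1)]
          rw [hσ2]
          exact ⟨hpt, hq⟩
  set Good : ℕ → Q → Prop := fun ℓ q => q ∈ O ℓ ∧ ∀ m, PathFrom ℓ m q with hG
  have good_ne : ∀ ℓ, ∃ q, Good ℓ q := by
    intro ℓ
    have h : ∀ m, ∃ q, q ∈ O ℓ ∧ PathFrom ℓ m q := by
      intro m
      obtain ⟨q, hq⟩ := hne (max m ℓ)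
      obtain ⟨q0, hq0, σ, hσ1, hσ2, hσ3⟩ := backpath (max m ℓ) q hq ℓ (le_max_right _ _)
      exact ⟨q0, hq0, anti ℓ q0 m (max m ℓ) (le_max_left _ _) ⟨σ, hσ1, hσ3⟩⟩
    obtain ⟨q, hq⟩ := exists_forall_of_antitone _
      (fun q m m' hle hm => ⟨hm.1, anti ℓ q m m' hle hm.2⟩) h
    exact ⟨q, (hq 0).1, fun m => (hq m).2⟩
  have good_step : ∀ ℓ q, Good ℓ q → ∃ q', Good (ℓ + 1) q' ∧ q' ∈ T ℓ q := by
    intro ℓ q hq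
    have h : ∀ m, ∃ q', (q' ∈ O (ℓ + 1) ∧ q' ∈ T ℓ q) ∧ PathFrom (ℓ + 1) m q' := by
      intro m
      obtain ⟨σ, hσ1, hσ2⟩ := hq.2 (max m (ℓ + 1))
      have hstep0 := hσ2 ℓ le_rfl (by omega)
      rw [hσ1] at hstep0
      refine ⟨σ (ℓ + 1), ⟨hstep0.2, hstep0.1⟩, ?_⟩
      exact anti (ℓ + 1) _ m (max m (ℓ + 1)) (le_max_left _ _)
        ⟨σ, rfl, fun k h1 h2 => hσ2 k (by omega) h2⟩
    obtain ⟨q', hq'⟩ := exists_forall_of_antitone _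
      (fun q' m m' hle hm => ⟨hm.1, anti (ℓ + 1) q' m m' hle hm.2⟩) h
    exact ⟨q', ⟨(hq' 0).1.1, fun m => (hq' m).2⟩, (hq' 0).1.2⟩
  -- construct the path
  obtain ⟨q0, hq0⟩ := good_ne 0
  let G : ∀ ℓ : ℕ, {q : Q // Good ℓ q} := fun ℓ =>
    Nat.rec ⟨q0, hq0⟩ (fun ℓ p =>
      ⟨Classical.choose (good_step ℓ p.1 p.2),
       (Classical.choose_spec (good_step ℓ p.1 p.2)).1⟩) ℓ
  refine ⟨fun ℓ => (G ℓ).1, fun ℓ => (G ℓ).2.1, fun ℓ => ?_⟩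
  exact (Classical.choose_spec (good_step ℓ (G ℓ).1 (G ℓ).2)).2

/-- Eventually every visited state is visited infinitely often. -/
lemma eventually_recurrent {Q : Type} [Finite Q] (ρ : ℕ → Q) :
    ∃ T : ℕ, ∀ ℓ ≥ T, ∀ n, ∃ k ≥ n, ρ k = ρ ℓ := by
  haveI := Fintype.ofFinite Q
  have hf : ∀ q : Q, ∃ n : ℕ, (∀ m, ∃ k ≥ m, ρ k = q) ∨ (∀ k ≥ n, ρ k ≠ q) := by
    intro q
    by_cases h : ∀ m, ∃ k ≥ m, ρ k = q
    · exact ⟨0, Or.inl h⟩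
    · push_neg at h
      obtain ⟨m, hm⟩ := h
      exact ⟨m, Or.inr hm⟩
  choose f hf using hf
  refine ⟨Finset.univ.sup f, fun ℓ hℓ n => ?_⟩
  rcases hf (ρ ℓ) with h | h
  · exact h n
  · exact absurd rfl (h ℓ (le_trans (Finset.le_sup (Finset.mem_univ (ρ ℓ))) hℓ))

end WeakNBAAux
namespace NBA

variable {Q A : Type}

lemma mem_scc_of {M : NBA Q A} {C : Set Q} {q s : Q} (hC : M.IsSCC C) (hq : q ∈ C)
    (h1 : M.Reach q s) (h2 : M.Reach s q) : s ∈ C := by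
  have hpairs : ∀ x ∈ insert s C, ∀ y ∈ insert s C, M.Reach x y ∧ M.Reach y x := by
    intro x hx y hy
    rcases hx with hx | hx <;> rcases hy with hy | hy
    · subst hx; subst hy; exact ⟨Relation.ReflTransGen.refl, Relation.ReflTransGen.refl⟩
    · subst hx
      exact ⟨h2.trans (hC.1 q hq y hy).1, (hC.1 y hy q hq).1.trans h1⟩
    · subst hy
      exact ⟨(hC.1 x hx q hq).1.trans h1, h2.trans (hC.1 q hq x hx).1⟩
    · exact hC.1 x hx y hy
  have := hC.2 (insert s C) (Set.subset_insert s C) hpairs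
  rw [← this]
  exact Set.mem_insert s C

lemma sccOf_isSCC (M : NBA Q A) (q : Q) :
    M.IsSCC {p | M.Reach q p ∧ M.Reach p q} := by
  constructor
  · rintro x ⟨hx1, hx2⟩ y ⟨hy1, hy2⟩
    exact ⟨hx2.trans hy1, hy2.trans hx1⟩
  · intro C' hsub hpairs
    apply Set.Subset.antisymm
    · intro s hs
      have hqC : q ∈ C' := hsub ⟨Relation.ReflTransGen.refl, Relation.ReflTransGen.refl⟩
      exact ⟨(hpairs q hqC s hs).1, (hpairs q hqC s hs).2⟩
    · exact hsub

lemma mem_sccOf (M : NBA Q A) (q : Q) : q ∈ {p | M.Reach q p ∧ M.Reach p q} :=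
  ⟨Relation.ReflTransGen.refl, Relation.ReflTransGen.refl⟩

lemma scc_eq_sccOf {M : NBA Q A} {C : Set Q} {q : Q} (hC : M.IsSCC C) (hq : q ∈ C) :
    C = {p | M.Reach q p ∧ M.Reach p q} := by
  apply Set.Subset.antisymm
  · intro s hs
    exact ⟨(hC.1 q hq s hs).1, (hC.1 q hq s hs).2⟩
  · intro s hs
    exact mem_scc_of hC hq hs.1 hs.2

lemma reach_along {M : NBA Q A} {w : ℕ → A} {ρ : ℕ → Q}
    (htrans : ∀ ℓ, ρ (ℓ + 1) ∈ M.trans (ρ ℓ) (w ℓ)) {m k : ℕ} (h : m ≤ k) :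
    M.Reach (ρ m) (ρ k) := by
  induction k, h using Nat.le_induction with
  | base => exact Relation.ReflTransGen.refl
  | succ k hk ih => exact ih.tail ⟨w k, htrans k⟩

/-- A path inside an SCC realizing reachability. -/
lemma path_in_scc {M : NBA Q A} {C : Set Q} (a₀ : A) (hC : M.IsSCC C) :
    ∀ x y : Q, M.Reach x y → x ∈ C → y ∈ C →
    ∃ (n : ℕ) (p : ℕ → Q) (u : ℕ → A), p 0 = x ∧ p n = y ∧
      ∀ i < n, p i ∈ C ∧ p (i + 1) ∈ C ∧ p (i + 1) ∈ M.trans (p i) (u i) := by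
  intro x y hreach hx hy
  induction hreach using Relation.ReflTransGen.head_induction_on with
  | refl => exact ⟨0, fun _ => y, fun _ => a₀, rfl, rfl, fun i h => by omega⟩
  | @head x s hstep hrest ih =>
    obtain ⟨a, ha⟩ := hstep
    have hsx : M.Reach s x := hrest.trans (hC.1 y hy x hx).1
    have hxs : M.Reach x s := Relation.ReflTransGen.single ⟨a, ha⟩
    have hsC : s ∈ C := mem_scc_of hC hx hxs hsx
    obtain ⟨n, p, u, hp0, hpn, hpath⟩ := ih hsC
    refine ⟨n + 1, fun i => if i = 0 then x else p (i - 1),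
      fun i => if i = 0 then a else u (i - 1), by simp, by simp [hpn], ?_⟩
    intro i hi
    rcases Nat.eq_zero_or_pos i with h0 | h0
    · subst h0
      simp only [if_pos rfl, if_neg (by omega : (1:ℕ) ≠ 0)]
      simpa [hp0] using ⟨hx, hsC, ha⟩
    · obtain ⟨j, rfl⟩ := Nat.exists_eq_succ_of_ne_zero (by omega : i ≠ 0)
      simp only [if_neg (by omega : j + 1 ≠ 0), if_neg (by omega : j + 1 + 1 ≠ 0)]
      have : j + 1 - 1 = j := by omega
      have h2 : j + 1 + 1 - 1 = j + 1 := by omega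
      rw [this, h2]
      exact hpath j (by omega)

/-- In an accepting inherently weak SCC, every cycle has an accepting transition. -/
lemma acc_scc_all_cycles {M : NBA Q A} {C : Set Q} (hC : M.IsSCC C)
    (hIW : M.InherentlyWeak C) (hAcc : M.AccSCC C) :
    ∀ n p u, M.IsCycle C n p u → M.CycleHasAcc n p u := by
  rcases hIW with h | h
  · exact h
  · exfalso
    obtain ⟨q0, hq0, a, q0', hq0', hacc⟩ := hAcc
    have htr : q0' ∈ M.trans q0 a := M.acc_sub (q0, a, q0') hacc
    obtain ⟨n, p, u, hp0, hpn, hpath⟩ :=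
      path_in_scc a hC q0' q0 (hC.1 q0' hq0' q0 hq0).1 hq0' hq0
    set P : ℕ → Q := fun i => if i = 0 then q0 else p (i - 1) with hP
    set U : ℕ → A := fun i => if i = 0 then a else u (i - 1) with hU
    have hcyc : M.IsCycle C (n + 1) P U := by
      refine ⟨by omega, by simp [hP, hpn], ?_⟩
      intro i hi
      rcases Nat.eq_zero_or_pos i with h0 | h0
      · subst h0
        simp only [hP, hU, if_pos rfl, if_neg (by omega : (1:ℕ) ≠ 0)]
        simpa [hp0] using ⟨hq0, hq0', htr⟩
      · obtain ⟨j, rfl⟩ := Nat.exists_eq_succ_of_ne_zero (by omega : i ≠ 0)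
        simp only [hP, hU, if_neg (by omega : j + 1 ≠ 0), if_neg (by omega : j + 1 + 1 ≠ 0)]
        have h1 : j + 1 - 1 = j := by omega
        have h2 : j + 1 + 1 - 1 = j + 1 := by omega
        rw [h1, h2]
        exact hpath j (by omega)
    apply h (n + 1) P U hcyc
    refine ⟨0, by omega, ?_⟩
    simp only [hP, hU, if_pos rfl, if_neg (by omega : (1:ℕ) ≠ 0)]
    simpa [hp0] using hacc

end NBA

namespace NBA

lemma weakStates_univ {Q A : Type} (M : NBA Q A)
    (hweak : ∀ C : Set Q, M.IsSCC C → M.InherentlyWeak C) :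
    M.weakStates = Set.univ := by
  apply Set.eq_univ_of_forall
  intro q
  exact ⟨_, M.sccOf_isSCC q, hweak _ (M.sccOf_isSCC q), M.mem_sccOf q⟩

lemma accepting_tail {Q A : Type} [Finite Q] {M : NBA Q A} {w : ℕ → A} {ρ : ℕ → Q} {N : ℕ}
    (htrans : ∀ ℓ, ρ (ℓ + 1) ∈ M.trans (ρ ℓ) (w ℓ))
    (hWA : ∀ ℓ ≥ N, ρ ℓ ∈ M.weakAccStates) :
    ∀ n, ∃ ℓ ≥ n, (ρ ℓ, w ℓ, ρ (ℓ + 1)) ∈ M.acc := by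
  obtain ⟨T0, hT0⟩ := WeakNBAAux.eventually_recurrent ρ
  set T := max T0 N with hT
  have hrec : ∀ ℓ ≥ T, ∀ n, ∃ k ≥ n, ρ k = ρ ℓ := fun ℓ hℓ => hT0 ℓ (le_trans (le_max_left _ _) hℓ)
  set C : Set Q := {p | M.Reach (ρ T) p ∧ M.Reach p (ρ T)} with hCdef
  have hCscc : M.IsSCC C := M.sccOf_isSCC (ρ T)
  have memC : ∀ ℓ ≥ T, ρ ℓ ∈ C := by
    intro ℓ hℓ
    refine ⟨reach_along htrans hℓ, ?_⟩
    obtain ⟨k, hk, hkeq⟩ := hrec T le_rfl ℓ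
    exact hkeq ▸ reach_along htrans hk
  obtain ⟨C', hC'scc, hC'iw, hC'acc, hmem⟩ := hWA T (le_max_right _ _)
  have hCC' : C' = C := scc_eq_sccOf hC'scc hmem
  rw [hCC'] at hC'iw hC'acc
  have hall := acc_scc_all_cycles hCscc hC'iw hC'acc
  intro n
  set m := max n T with hm
  obtain ⟨k, hk, hkeq⟩ := hrec m (le_max_right _ _) (m + 1)
  have hcyc : M.IsCycle C (k - m) (fun i => ρ (m + i)) (fun i => w (m + i)) := by
    refine ⟨by omega, ?_, ?_⟩
    · have : m + (k - m) = k := by omega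
      simp only [this, Nat.add_zero, hkeq]
    · intro i hi
      refine ⟨memC _ (by omega), memC _ (by omega), ?_⟩
      exact htrans (m + i)
  obtain ⟨i, hi, hacc⟩ := hall _ _ _ hcyc
  exact ⟨m + i, by omega, hacc⟩

lemma run_mem_reachSet {Q A : Type} {M : NBA Q A} {w : ℕ → A} {ρ : ℕ → Q}
    (hrun : M.IsRun w ρ) : ∀ ℓ, ρ ℓ ∈ M.reachSet w ℓ := by
  intro ℓ
  induction ℓ with
  | zero => simp [reachSet, hrun.1]
  | succ ℓ ih => exact ⟨ρ ℓ, ih, hrun.2 ℓ⟩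

lemma stepSet_mono {Q A : Type} {M : NBA Q A} {S S' : Set Q} (h : S ⊆ S') (a : A) :
    M.stepSet S a ⊆ M.stepSet S' a := by
  rintro q ⟨p, hp, hq⟩
  exact ⟨p, h hp, hq⟩

lemma weakSeq_snd_sub {Q A : Type} (M : NBA Q A) (w : ℕ → A) :
    ∀ ℓ, (M.weakSeq w ℓ).2 ⊆ M.reachSet w ℓ ∩ M.weakAccStates := by
  intro ℓ
  induction ℓ with
  | zero => simp [weakSeq]
  | succ ℓ ih =>
    show (if (M.weakSeq w ℓ).2 = ∅ then _ else _ : Set Q) ⊆ _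
    split
    · intro q hq
      exact ⟨hq.1.1, hq.2⟩
    · intro q hq
      exact ⟨stepSet_mono (fun p hp => (ih hp).1) (w ℓ) hq.1, hq.2⟩

lemma prefix_run {Q A : Type} {M : NBA Q A} {w : ℕ → A} :
    ∀ ℓ, ∀ q ∈ M.reachSet w ℓ, ∃ σ : ℕ → Q, σ 0 = M.init ∧ σ ℓ = q ∧
      ∀ k < ℓ, σ (k + 1) ∈ M.trans (σ k) (w k) := by
  intro ℓ
  induction ℓ with
  | zero =>
    intro q hq
    rcases hq with rfl
    exact ⟨fun _ => M.init, rfl, rfl, fun k h => by omega⟩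
  | succ ℓ ih =>
    rintro q ⟨p, hp, hq⟩
    obtain ⟨σ, hσ0, hσℓ, hσt⟩ := ih p hp
    refine ⟨fun k => if k = ℓ + 1 then q else σ k, by simp [hσ0], by simp, ?_⟩
    intro k hk
    rcases Nat.lt_or_ge k ℓ with h | h
    · simp only [if_neg (by omega : k + 1 ≠ ℓ + 1), if_neg (by omega : k ≠ ℓ + 1)]
      exact hσt k h
    · have : k = ℓ := by omega
      subst this
      simp only [if_pos rfl, if_neg (by omega : k ≠ k + 1)]
      rw [hσℓ]
      exact hq

end NBA

/-- For a weak Büchi automaton `M` (every SCC is inherently weak,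
so `W = Q`), a word `w` is in `L(M)` iff in the inherently-weak-SCC construction
`O_ℓ = ∅` for only finitely many `ℓ`; moreover at most `3 ^ |Q|` distinct pairs
`(P_ℓ, O_ℓ)` occur, so this yields an equivalent deterministic automaton with at
most `3 ^ |Q|` states. -/
theorem weak_nba_determinization {Q A : Type} [Finite Q] [Finite A]
    (M : NBA Q A) (hweak : ∀ C : Set Q, M.IsSCC C → M.InherentlyWeak C) :
    M.weakStates = Set.univ ∧
    (∀ w : ℕ → A, M.InLanguage w ↔ {ℓ : ℕ | (M.weakSeq w ℓ).2 = ∅}.Finite) ∧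
    (∀ w : ℕ → A, (Set.range (M.weakSeq w)).ncard ≤ 3 ^ Nat.card Q) := by
  have hWuniv : M.weakStates = Set.univ := NBA.weakStates_univ M hweak
  have hunfold : ∀ (w : ℕ → A) (ℓ : ℕ), (M.weakSeq w (ℓ + 1)).2 =
      if (M.weakSeq w ℓ).2 = ∅ then
        (M.reachSet w (ℓ + 1) ∩ M.weakStates) ∩ M.weakAccStates
      else M.stepSet (M.weakSeq w ℓ).2 (w ℓ) ∩ M.weakAccStates := fun w ℓ => rfl
  refine ⟨hWuniv, ?_, ?_⟩
  · intro w
    constructor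
    · -- language membership implies finitely many empty O's
      rintro ⟨ρ, hrun, hacc⟩
      by_contra hinf
      obtain ⟨T0, hT0⟩ := WeakNBAAux.eventually_recurrent ρ
      set C : Set Q := {p | M.Reach (ρ T0) p ∧ M.Reach p (ρ T0)} with hC
      have hCscc : M.IsSCC C := M.sccOf_isSCC (ρ T0)
      have memC : ∀ ℓ ≥ T0, ρ ℓ ∈ C := by
        intro ℓ hℓ
        refine ⟨NBA.reach_along hrun.2 hℓ, ?_⟩
        obtain ⟨k, hk, hkeq⟩ := hT0 T0 le_rfl ℓ
        exact hkeq ▸ NBA.reach_along hrun.2 hk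
      have hCacc : M.AccSCC C := by
        obtain ⟨ℓ, hℓ, ha⟩ := hacc T0
        exact ⟨ρ ℓ, memC ℓ hℓ, w ℓ, ρ (ℓ + 1), memC (ℓ + 1) (by omega), ha⟩
      have hWA : ∀ ℓ ≥ T0, ρ ℓ ∈ M.weakAccStates := fun ℓ hℓ =>
        ⟨C, hCscc, hweak C hCscc, hCacc, memC ℓ hℓ⟩
      obtain ⟨ℓ0, hℓ0mem, hℓ0ge⟩ : ∃ ℓ0 ∈ {ℓ : ℕ | (M.weakSeq w ℓ).2 = ∅}, T0 ≤ ℓ0 := by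
        by_contra hcon
        push_neg at hcon
        exact hinf (Set.Finite.subset (Set.finite_Iio T0) (fun ℓ hℓ => hcon ℓ hℓ))
      simp only [Set.mem_setOf_eq] at hℓ0mem
      have hmem : ∀ m, ℓ0 + 1 ≤ m → ρ m ∈ (M.weakSeq w m).2 := by
        intro m hm
        induction m, hm using Nat.le_induction with
        | base =>
          rw [hunfold w ℓ0, if_pos hℓ0mem]
          exact ⟨⟨NBA.run_mem_reachSet hrun (ℓ0 + 1), by rw [hWuniv]; trivial⟩,
            hWA _ (by omega)⟩
        | succ m hm ih =>
          have hne : (M.weakSeq w m).2 ≠ ∅ := fun h => by rw [h] at ih; exact ih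
          rw [hunfold w m, if_neg hne]
          exact ⟨⟨ρ m, ih, hrun.2 m⟩, hWA _ (by omega)⟩
      apply hinf
      apply Set.Finite.subset (Set.finite_Iic (ℓ0 + 1))
      intro m hms
      simp only [Set.mem_setOf_eq] at hms
      by_contra hgt
      simp only [Set.mem_Iic, not_le] at hgt
      have := hmem m (by omega)
      rw [hms] at this
      exact this
    · -- finitely many empty O's implies language membership
      intro hfin
      obtain ⟨B, hB⟩ := hfin.bddAbove
      set N := B + 1 with hN
      have hne : ∀ ℓ, N ≤ ℓ → (M.weakSeq w ℓ).2 ≠ ∅ := by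
        intro ℓ hℓ h
        have := hB h
        omega
      obtain ⟨τ, hτmem, hτstep⟩ := WeakNBAAux.koenig
        (fun j q => M.trans q (w (N + j))) (fun j => (M.weakSeq w (N + j)).2)
        (fun j => Set.nonempty_iff_ne_empty.2 (hne (N + j) (by omega)))
        (by
          intro j q hq
          have hq' : q ∈ (M.weakSeq w ((N + j) + 1)).2 := hq
          rw [hunfold w (N + j), if_neg (hne (N + j) (by omega))] at hq'
          obtain ⟨p, hp, ht⟩ := hq'.1
          exact ⟨p, hp, ht⟩)
      have hτS : τ 0 ∈ M.reachSet w N :=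
        (M.weakSeq_snd_sub w N (by simpa using hτmem 0)).1
      obtain ⟨σ, hσ0, hσN, hσt⟩ := NBA.prefix_run N (τ 0) hτS
      set ρ : ℕ → Q := fun k => if k < N then σ k else τ (k - N) with hρ
      have hρ0 : ρ 0 = M.init := by
        rw [hρ]
        simp only [if_pos (by omega : 0 < N)]
        exact hσ0
      have htransρ : ∀ k, ρ (k + 1) ∈ M.trans (ρ k) (w k) := by
        intro k
        rcases Nat.lt_or_ge (k + 1) N with h | h
        · simp only [hρ, if_pos h, if_pos (by omega : k < N)]
          exact hσt k (by omega)
        · rcases Nat.eq_or_lt_of_le h with h' | h'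
          · simp only [hρ, if_neg (by omega : ¬ k + 1 < N), if_pos (by omega : k < N)]
            have : k + 1 - N = 0 := by omega
            rw [this, ← hσN, h']
            exact hσt k (by omega)
          · simp only [hρ, if_neg (by omega : ¬ k + 1 < N), if_neg (by omega : ¬ k < N)]
            have h1 : k + 1 - N = (k - N) + 1 := by omega
            have h2 : N + (k - N) = k := by omega
            rw [h1]
            have := hτstep (k - N)
            rwa [h2] at this
      have hWAρ : ∀ k, N ≤ k → ρ k ∈ M.weakAccStates := by
        intro k hk
        simp only [hρ, if_neg (by omega : ¬ k < N)]
        have := hτmem (k - N)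
        rw [show N + (k - N) = k by omega] at this
        exact (M.weakSeq_snd_sub w k this).2
      exact ⟨ρ, ⟨hρ0, htransρ⟩, NBA.accepting_tail htransρ hWAρ⟩
  · -- at most 3 ^ |Q| pairs
    intro w
    have hsub : ∀ x ∈ Set.range (M.weakSeq w), x.2 ⊆ x.1 := by
      rintro x ⟨ℓ, rfl⟩
      cases ℓ with
      | zero => simp [NBA.weakSeq]
      | succ ℓ =>
        intro q hq
        have h2 := M.weakSeq_snd_sub w (ℓ + 1) hq
        exact ⟨h2.1, by rw [hWuniv]; trivial⟩
    classical
    set g : Set Q × Set Q → (Q → Fin 3) := fun x q =>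
      if q ∈ x.2 then 2 else if q ∈ x.1 then 1 else 0 with hg
    have key : ∀ (z : Set Q × Set Q), z.2 ⊆ z.1 → ∀ q : Q,
        (q ∈ z.2 ↔ g z q = 2) ∧ (q ∈ z.1 ↔ (g z q = 2 ∨ g z q = 1)) := by
      intro z hz q
      simp only [hg]
      by_cases h2 : q ∈ z.2
      · simp [h2, hz h2]
      · by_cases h1 : q ∈ z.1 <;> simp [h2, h1]
    have hinj : Set.InjOn g (Set.range (M.weakSeq w)) := by
      intro x hx y hy hxy
      have e1 : x.1 = y.1 := by
        ext q
        rw [(key x (hsub x hx) q).2, (key y (hsub y hy) q).2, hxy]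
      have e2 : x.2 = y.2 := by
        ext q
        rw [(key x (hsub x hx) q).1, (key y (hsub y hy) q).1, hxy]
      exact Prod.ext e1 e2
    calc (Set.range (M.weakSeq w)).ncard
        = (g '' Set.range (M.weakSeq w)).ncard := (Set.ncard_image_of_injOn hinj).symm
      _ ≤ (Set.univ : Set (Q → Fin 3)).ncard :=
          Set.ncard_le_ncard (Set.subset_univ _) Set.finite_univ
      _ = Nat.card (Q → Fin 3) := Set.ncard_univ _
      _ = 3 ^ Nat.card Q := by
          rw [Nat.card_fun]
          simp
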